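/- Let γ > 1 and g(x) = (1/(γ+1))(2γx − (γ−1))((γ−1)/(γ+1) + (2/(γ+1))(1/x))^γ. Then g'(x) > 0 for all x > 1. -/

import Mathlib

/-- For `γ > 1`, the entropy-jump function
`g(x) = (1/(γ+1))(2γx − (γ−1))((γ−1)/(γ+1) + (2/(γ+1))(1/x))^γ`
has strictly positive derivative for all `x > 1`. -/
theorem stmt_1 (γ : ℝ) (hγ : 1 < γ) :
    ∀ x : ℝ, 1 < x →
      0 < deriv (fun y : ℝ =>
        (1/(γ+1)) * (2*γ*y - (γ-1)) * ((γ-1)/(γ+1) + (2/(γ+1)) * (1/y)) ^ γ) x := by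
  intro x hx
  have hx0 : (0:ℝ) < x := lt_trans one_pos hx
  have hγ1 : (0:ℝ) < γ + 1 := by linarith
  have hu : 0 < (γ-1)/(γ+1) + (2/(γ+1)) * (1/x) := by
    have h1 : 0 < (γ-1)/(γ+1) := div_pos (by linarith) hγ1
    have h2 : 0 < (2/(γ+1)) * (1/x) := by positivity
    linarith
  have hu' : HasDerivAt (fun y : ℝ => (γ-1)/(γ+1) + (2/(γ+1)) * (1/y))
      ((2/(γ+1)) * (-(x^2)⁻¹)) x := by
    have h := ((hasDerivAt_inv (ne_of_gt hx0)).const_mul (2/(γ+1))).const_add ((γ-1)/(γ+1))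
    simpa [one_div] using h
  have hpow := hu'.rpow_const (p := γ) (Or.inl (ne_of_gt hu))
  have hlin : HasDerivAt (fun y : ℝ => (1/(γ+1)) * (2*γ*y - (γ-1)))
      ((1/(γ+1)) * (2*γ)) x := by
    have h := (((hasDerivAt_id x).const_mul (2*γ)).sub_const (γ-1)).const_mul (1/(γ+1))
    simpa using h
  have hD := hlin.mul hpow
  rw [(show HasDerivAt (fun y : ℝ => (1/(γ+1)) * (2*γ*y - (γ-1)) * ((γ-1)/(γ+1) + (2/(γ+1)) * (1/y)) ^ γ) _ x from hD).deriv]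
  set u : ℝ := (γ-1)/(γ+1) + (2/(γ+1)) * (1/x) with hu_def
  have hsplit : u ^ γ = u ^ (γ-1) * u := by
    nth_rewrite 1 [show γ = (γ-1)+1 by ring]
    rw [Real.rpow_add hu, Real.rpow_one]
  rw [hsplit]
  have hne : (γ+1) ≠ 0 := ne_of_gt hγ1
  have hxne : x ≠ 0 := ne_of_gt hx0
  have key : (1/(γ+1)) * (2*γ) * (u ^ (γ-1) * u)
      + (1/(γ+1)) * (2*γ*x - (γ-1)) * (2/(γ+1) * -(x^2)⁻¹ * γ * u ^ (γ-1))
      = u ^ (γ-1) * (2*γ*(γ-1)*(x-1)^2 / ((γ+1)^2 * x^2)) := by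
    rw [hu_def]
    field_simp
    ring
  rw [key]
  have h1 : 0 < u ^ (γ-1) := Real.rpow_pos_of_pos hu _
  have h2 : 0 < 2*γ*(γ-1)*(x-1)^2 / ((γ+1)^2 * x^2) := by
    have hsq : 0 < (x-1)^2 := pow_pos (by linarith) 2
    exact div_pos (mul_pos (mul_pos (mul_pos two_pos (by linarith)) (by linarith)) hsq) (by positivity)
  exact mul_pos h1 h2
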